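/- The dictator's utility U has exactly one global maximizer on ℝ: there exists a unique real number s* such that U(s) ≤ U(s*) for every real s. -/

import Mathlib

noncomputable def Ubar (a b T Wi Wj Di Dj s : ℝ) : ℝ :=
  a * (Wi + s * T)
    - b * (((Wi - Wj + 2 * s * T - T) / 2) ^ 2 + ((Di - Dj + 2 * s * T - T) / 2) ^ 2)

noncomputable def Uhat (a b T eta Wi Wj Di Dj s : ℝ) : ℝ :=
  Ubar a b T Wi Wj Di Dj s + a * eta * (Di + s * T)

noncomputable def Udict (a b T eta Wi Wj Di Dj s : ℝ) : ℝ :=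
  if Di + s * T < 0 then Uhat a b T eta Wi Wj Di Dj s else Ubar a b T Wi Wj Di Dj s

theorem stmt3 (a b T eta Wi Wj Di Dj : ℝ)
    (ha : 0 < a) (hb : 0 < b) (hT : 0 < T) (heta0 : 0 ≤ eta) (heta1 : eta < 1) :
    ∃! sstar : ℝ, ∀ s : ℝ, Udict a b T eta Wi Wj Di Dj s ≤ Udict a b T eta Wi Wj Di Dj sstar := by
  have hcpos : (0:ℝ) < 2*b*T^2 := by positivity
  set c : ℝ := 2*b*T^2 with hc
  set L : ℝ := a*T - b*T*(Wi - Wj + Di - Dj - 2*T) with hLdef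
  set L' : ℝ := L + a*eta*T with hL'def
  set s1 : ℝ := L/(2*c) with hs1def
  set s2 : ℝ := L'/(2*c) with hs2def
  set s0 : ℝ := -Di/T with hs0def
  have hcne : c ≠ 0 := ne_of_gt hcpos
  have hTne : T ≠ 0 := ne_of_gt hT
  have hL1 : L = 2*c*s1 := by rw [hs1def]; field_simp
  have hL2 : L' = 2*c*s2 := by rw [hs2def]; field_simp
  have hLle : L ≤ L' := by
    rw [hL'def]
    nlinarith [mul_nonneg (mul_nonneg ha.le heta0) hT.le]
  have hs12 : s1 ≤ s2 := by nlinarith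
  have hD0 : Di + s0*T = 0 := by rw [hs0def]; field_simp; ring
  have hiff : ∀ s : ℝ, Di + s*T < 0 ↔ s < s0 := by
    intro s
    constructor
    · intro h; by_contra h'; push_neg at h'
      nlinarith [mul_le_mul_of_nonneg_right h' hT.le]
    · intro h; nlinarith [mul_lt_mul_of_pos_right h hT]
  -- difference identities
  have hUbar_diff : ∀ s t : ℝ, Ubar a b T Wi Wj Di Dj s - Ubar a b T Wi Wj Di Dj t
      = (t - s) * (c*(s+t) - L) := by
    intro s t; simp only [Ubar, hc, hLdef]; ring
  have hUhat_diff : ∀ s t : ℝ, Uhat a b T eta Wi Wj Di Dj s - Uhat a b T eta Wi Wj Di Dj t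
      = (t - s) * (c*(s+t) - L') := by
    intro s t; simp only [Uhat, Ubar, hL'def, hc, hLdef]; ring
  -- midpoint strict concavity identities
  have hmidUbar : ∀ s t : ℝ, Ubar a b T Wi Wj Di Dj ((s+t)/2)
      = (Ubar a b T Wi Wj Di Dj s + Ubar a b T Wi Wj Di Dj t)/2 + c*((s-t)/2)^2 := by
    intro s t; simp only [Ubar, hc]; ring
  have hmidUhat : ∀ s t : ℝ, Uhat a b T eta Wi Wj Di Dj ((s+t)/2)
      = (Uhat a b T eta Wi Wj Di Dj s + Uhat a b T eta Wi Wj Di Dj t)/2 + c*((s-t)/2)^2 := by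
    intro s t; simp only [Uhat, Ubar, hc]; ring
  clear_value c L L' s1 s2 s0
  clear hc hLdef hL'def hs1def hs2def hs0def hcne hTne
  -- vertex lemmas
  have F1 : ∀ s : ℝ, Ubar a b T Wi Wj Di Dj s ≤ Ubar a b T Wi Wj Di Dj s1 := by
    intro s
    have h := hUbar_diff s1 s
    rw [hL1] at h
    nlinarith [mul_nonneg hcpos.le (sq_nonneg (s - s1))]
  have F2 : ∀ s : ℝ, Uhat a b T eta Wi Wj Di Dj s ≤ Uhat a b T eta Wi Wj Di Dj s2 := by
    intro s
    have h := hUhat_diff s2 s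
    rw [hL2] at h
    nlinarith [mul_nonneg hcpos.le (sq_nonneg (s - s2))]
  -- monotonicity lemmas
  have F3 : ∀ s t : ℝ, s1 ≤ t → t ≤ s → Ubar a b T Wi Wj Di Dj s ≤ Ubar a b T Wi Wj Di Dj t := by
    intro s t h1 h2
    have h := hUbar_diff s t
    have hp : 0 ≤ (s - t) * (c*(s+t) - L) := by
      apply mul_nonneg (by linarith)
      nlinarith [mul_nonneg hcpos.le (sub_nonneg.mpr h1),
        mul_nonneg hcpos.le (sub_nonneg.mpr (le_trans h1 h2))]
    nlinarith
  have F4 : ∀ s t : ℝ, s ≤ t → t ≤ s2 → Uhat a b T eta Wi Wj Di Dj s ≤ Uhat a b T eta Wi Wj Di Dj t := by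
    intro s t h1 h2
    have h := hUhat_diff s t
    have hp : 0 ≤ (t - s) * (L' - c*(s+t)) := by
      apply mul_nonneg (by linarith)
      nlinarith [mul_nonneg hcpos.le (sub_nonneg.mpr h2),
        mul_nonneg hcpos.le (sub_nonneg.mpr (le_trans h1 h2))]
    nlinarith
  have F5 : ∀ s t : ℝ, s2 ≤ t → t ≤ s → Uhat a b T eta Wi Wj Di Dj s ≤ Uhat a b T eta Wi Wj Di Dj t := by
    intro s t h1 h2
    have h := hUhat_diff s t
    have hp : 0 ≤ (s - t) * (c*(s+t) - L') := by
      apply mul_nonneg (by linarith)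
      nlinarith [mul_nonneg hcpos.le (sub_nonneg.mpr h1),
        mul_nonneg hcpos.le (sub_nonneg.mpr (le_trans h1 h2))]
    nlinarith
  have heq0 : Uhat a b T eta Wi Wj Di Dj s0 = Ubar a b T Wi Wj Di Dj s0 := by
    simp only [Uhat]
    rw [hD0]; ring
  have hmin1 : ∀ s : ℝ, Udict a b T eta Wi Wj Di Dj s ≤ Ubar a b T Wi Wj Di Dj s := by
    intro s
    simp only [Udict]
    split
    · rename_i hlt
      simp only [Uhat]
      nlinarith [mul_nonpos_of_nonneg_of_nonpos (mul_nonneg ha.le heta0) hlt.le]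
    · exact le_refl _
  have hmin2 : ∀ s : ℝ, Udict a b T eta Wi Wj Di Dj s ≤ Uhat a b T eta Wi Wj Di Dj s := by
    intro s
    simp only [Udict]
    split
    · exact le_refl _
    · rename_i hge
      push_neg at hge
      simp only [Uhat]
      nlinarith [mul_nonneg (mul_nonneg ha.le heta0) hge]
  set sstar : ℝ := max s1 (min s2 s0) with hsstar
  have hmax : ∀ s : ℝ, Udict a b T eta Wi Wj Di Dj s ≤ Udict a b T eta Wi Wj Di Dj sstar := by
    intro s
    rcases le_or_gt s0 s1 with h01 | h01
    · -- sstar = s1, value is Ubar s1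
      have hss : sstar = s1 := by
        rw [hsstar, max_eq_left (le_trans (min_le_right _ _) h01)]
      have hD : ¬ (Di + s1*T < 0) := by
        rw [hiff]; exact not_lt.mpr h01
      have hv : Udict a b T eta Wi Wj Di Dj sstar = Ubar a b T Wi Wj Di Dj s1 := by
        rw [hss]; simp only [Udict]; rw [if_neg hD]
      rw [hv]
      by_cases hs : Di + s*T < 0
      · have hss0 : s < s0 := (hiff s).mp hs
        have h1 : Udict a b T eta Wi Wj Di Dj s = Uhat a b T eta Wi Wj Di Dj s := by
          simp only [Udict]; rw [if_pos hs]
        rw [h1]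
        calc Uhat a b T eta Wi Wj Di Dj s ≤ Uhat a b T eta Wi Wj Di Dj s0 :=
              F4 s s0 hss0.le (le_trans h01 hs12)
          _ = Ubar a b T Wi Wj Di Dj s0 := heq0
          _ ≤ Ubar a b T Wi Wj Di Dj s1 := F1 s0
      · have h1 : Udict a b T eta Wi Wj Di Dj s = Ubar a b T Wi Wj Di Dj s := by
          simp only [Udict]; rw [if_neg hs]
        rw [h1]; exact F1 s
    · rcases le_or_gt s0 s2 with h02 | h02
      · -- sstar = s0
        have hss : sstar = s0 := by
          rw [hsstar, min_eq_right h02, max_eq_right h01.le]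
        have hD : ¬ (Di + s0*T < 0) := by rw [hD0]; exact lt_irrefl 0
        have hv : Udict a b T eta Wi Wj Di Dj sstar = Ubar a b T Wi Wj Di Dj s0 := by
          rw [hss]; simp only [Udict]; rw [if_neg hD]
        rw [hv]
        by_cases hs : Di + s*T < 0
        · have hss0 : s < s0 := (hiff s).mp hs
          have h1 : Udict a b T eta Wi Wj Di Dj s = Uhat a b T eta Wi Wj Di Dj s := by
            simp only [Udict]; rw [if_pos hs]
          rw [h1, ← heq0]
          exact F4 s s0 hss0.le h02
        · have hss0 : s0 ≤ s := by
            rw [hiff s] at hs; exact not_lt.mp hs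
          have h1 : Udict a b T eta Wi Wj Di Dj s = Ubar a b T Wi Wj Di Dj s := by
            simp only [Udict]; rw [if_neg hs]
          rw [h1]
          exact F3 s s0 h01.le hss0
      · -- sstar = s2, value Uhat s2
        have hss : sstar = s2 := by
          rw [hsstar, min_eq_left h02.le, max_eq_right hs12]
        have hD : Di + s2*T < 0 := (hiff s2).mpr h02
        have hv : Udict a b T eta Wi Wj Di Dj sstar = Uhat a b T eta Wi Wj Di Dj s2 := by
          rw [hss]; simp only [Udict]; rw [if_pos hD]
        rw [hv]
        by_cases hs : Di + s*T < 0
        · have h1 : Udict a b T eta Wi Wj Di Dj s = Uhat a b T eta Wi Wj Di Dj s := by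
            simp only [Udict]; rw [if_pos hs]
          rw [h1]; exact F2 s
        · have hss0 : s0 ≤ s := by
            rw [hiff s] at hs; exact not_lt.mp hs
          have h1 : Udict a b T eta Wi Wj Di Dj s = Ubar a b T Wi Wj Di Dj s := by
            simp only [Udict]; rw [if_neg hs]
          rw [h1]
          calc Ubar a b T Wi Wj Di Dj s ≤ Ubar a b T Wi Wj Di Dj s0 :=
                F3 s s0 (le_trans hs12 h02.le) hss0
            _ = Uhat a b T eta Wi Wj Di Dj s0 := heq0.symm
            _ ≤ Uhat a b T eta Wi Wj Di Dj s2 := F5 s0 s2 (le_refl s2) h02.le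
  refine ⟨sstar, hmax, ?_⟩
  intro t ht
  by_contra hne
  have hv1 : Udict a b T eta Wi Wj Di Dj t = Udict a b T eta Wi Wj Di Dj sstar :=
    le_antisymm (hmax t) (ht sstar)
  set m : ℝ := (t + sstar)/2 with hm
  have hsq : 0 < c*((t - sstar)/2)^2 := by
    have hne' : t - sstar ≠ 0 := sub_ne_zero.mpr hne
    have : ((t - sstar)/2) ≠ 0 := by
      intro h; apply hne'; linarith [h]
    positivity
  have hb1 : Udict a b T eta Wi Wj Di Dj sstar < Ubar a b T Wi Wj Di Dj m := by
    rw [hm, hmidUbar t sstar]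
    have h1 := hmin1 t
    have h2 := hmin1 sstar
    rw [hv1] at h1
    linarith
  have hb2 : Udict a b T eta Wi Wj Di Dj sstar < Uhat a b T eta Wi Wj Di Dj m := by
    rw [hm, hmidUhat t sstar]
    have h1 := hmin2 t
    have h2 := hmin2 sstar
    rw [hv1] at h1
    linarith
  have hm1 : Udict a b T eta Wi Wj Di Dj sstar < Udict a b T eta Wi Wj Di Dj m := by
    by_cases hDm : Di + m * T < 0
    · have h' : Udict a b T eta Wi Wj Di Dj m = Uhat a b T eta Wi Wj Di Dj m := by
        simp only [Udict]; rw [if_pos hDm]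
      rw [h']; exact hb2
    · have h' : Udict a b T eta Wi Wj Di Dj m = Ubar a b T Wi Wj Di Dj m := by
        simp only [Udict]; rw [if_neg hDm]
      rw [h']; exact hb1
  exact absurd (hmax m) (not_le.mpr hm1)
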